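/- Let S be a nonempty set, V ⊆ ℓ∞(S) a linear subspace of countable dimension, and W a subspace of V containing all constant functions. Let X be a measurable space and for each x ∈ X let Ψˣ : W → ℝ be a linear functional such that x ↦ Ψˣ(f) is measurable for every f ∈ W, Ψˣ(1) = 1, and Ψˣ(f) ≥ 0 for every f ∈ W with f ≥ 0 pointwise. Then there exist linear functionals Φˣ : V → ℝ extending Ψˣ, such that x ↦ Φˣ(f) is measurable for every f ∈ V and Φˣ(f) ≥ 0 for every f ∈ V with f ≥ 0 pointwise. -/

import Mathlib

open MeasureTheory Submodule

private theorem pos_mono {S : Type*} {U : Submodule ℝ (S → ℝ)} (φ : U →ₗ[ℝ] ℝ)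
    (hpos : ∀ f : U, (0 : S → ℝ) ≤ (f : S → ℝ) → 0 ≤ φ f)
    {u v : U} (h : (u : S → ℝ) ≤ (v : S → ℝ)) : φ u ≤ φ v := by
  have h0 : (0 : S → ℝ) ≤ ((v - u : U) : S → ℝ) := by
    intro s
    have := h s
    simp only [Submodule.coe_sub, Pi.sub_apply, Pi.zero_apply]
    linarith
  have := hpos (v - u) h0
  rw [map_sub] at this
  linarith

private theorem ext_step {S X : Type*} [Nonempty S] [MeasurableSpace X]
    (U U' : Submodule ℝ (S → ℝ)) (g : S → ℝ)
    (h1U : (fun _ : S => (1:ℝ)) ∈ U)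
    (hgC : ∃ C : ℝ, ∀ s, |g s| ≤ C)
    (hU' : U' = U ⊔ Submodule.span ℝ {g})
    (T : Set (S → ℝ)) (hTc : T.Countable) (hTU : T ⊆ (U : Set (S → ℝ)))
    (hTdense : ∀ u ∈ U, ∀ ε : ℝ, 0 < ε →
      ∃ t ∈ T, u ≤ t ∧ t ≤ u + ε • (fun _ : S => (1:ℝ)))
    (Φ : X → U →ₗ[ℝ] ℝ)
    (hΦmeas : ∀ f : U, Measurable fun x => Φ x f)
    (hΦone : ∀ x, Φ x ⟨fun _ => 1, h1U⟩ = 1)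
    (hΦpos : ∀ x : X, ∀ f : U, (0 : S → ℝ) ≤ (f : S → ℝ) → 0 ≤ Φ x f) :
    ∃ Φ' : X → U' →ₗ[ℝ] ℝ,
      (∀ x, ∀ f : U', ∀ hf : (f : S → ℝ) ∈ U, Φ' x f = Φ x ⟨f, hf⟩) ∧
      (∀ f : U', Measurable fun x => Φ' x f) ∧
      (∀ x : X, ∀ f : U', (0 : S → ℝ) ≤ (f : S → ℝ) → 0 ≤ Φ' x f) := by
  classical
  by_cases hg : g ∈ U
  · -- trivial case : U' = U
    have hle : U' ≤ U := by
      rw [hU']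
      exact sup_le le_rfl ((span_le).2 (Set.singleton_subset_iff.2 hg))
    refine ⟨fun x => (Φ x).comp (Submodule.inclusion hle), ?_, ?_, ?_⟩
    · intro x f hf
      simp only [LinearMap.comp_apply]
      congr 1
    · intro f
      exact hΦmeas (Submodule.inclusion hle f)
    · intro x f hf
      exact hΦpos x (Submodule.inclusion hle f) hf
  · obtain ⟨C, hC⟩ := hgC
    have mono : ∀ x : X, ∀ u v : U, (u : S → ℝ) ≤ (v : S → ℝ) → Φ x u ≤ Φ x v :=
      fun x u v h => pos_mono (Φ x) (hΦpos x) h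
    -- the set of dominating elements of T
    have hT2ne : {t ∈ T | g ≤ t}.Nonempty := by
      have hCU : (fun _ : S => C) ∈ U := by
        have : (fun _ : S => C) = C • (fun _ : S => (1:ℝ)) := by
          funext s; simp
        rw [this]
        exact smul_mem _ _ h1U
      obtain ⟨t, htT, htle, -⟩ := hTdense _ hCU 1 one_pos
      exact ⟨t, htT, fun s => le_trans (le_trans (le_abs_self _) (hC s)) (htle s)⟩
    obtain ⟨tseq, htseq⟩ := (hTc.mono (Set.sep_subset _ _)).exists_eq_range hT2ne
    have htU : ∀ k, tseq k ∈ U := fun k =>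
      hTU (show tseq k ∈ {t ∈ T | g ≤ t} from htseq ▸ Set.mem_range_self k).1
    have htg : ∀ k, g ≤ tseq k := fun k =>
      (show tseq k ∈ {t ∈ T | g ≤ t} from htseq ▸ Set.mem_range_self k).2
    set c : X → ℝ := fun x => ⨅ k, Φ x ⟨tseq k, htU k⟩ with hc
    have hmCU : (fun _ : S => (-C:ℝ)) ∈ U := by
      have : (fun _ : S => (-C:ℝ)) = (-C) • (fun _ : S => (1:ℝ)) := by funext s; simp
      rw [this]; exact smul_mem _ _ h1U
    have hlow : ∀ x k, (-C : ℝ) ≤ Φ x ⟨tseq k, htU k⟩ := by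
      intro x k
      have h1 : ((⟨fun _ => (-C : ℝ), hmCU⟩ : U) : S → ℝ) ≤ ((⟨tseq k, htU k⟩ : U) : S → ℝ) := by
        intro s
        have h2 := (abs_le.1 (hC s)).1
        have h3 := htg k s
        simp only
        linarith
      have h4 := mono x _ _ h1
      have heq : (⟨fun _ => (-C : ℝ), hmCU⟩ : U) = (-C) • (⟨fun _ => 1, h1U⟩ : U) := by
        apply Subtype.ext
        funext s
        simp
      rw [heq, _root_.map_smul, hΦone] at h4
      simpa using h4
    have hbdd : ∀ x, BddBelow (Set.range fun k => Φ x ⟨tseq k, htU k⟩) :=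
      fun x => ⟨-C, by rintro y ⟨k, rfl⟩; exact hlow x k⟩
    have hcmeas : Measurable c := Measurable.iInf fun k => hΦmeas _
    -- key inequalities
    have hK2 : ∀ x : X, ∀ u : U, (u : S → ℝ) ≤ g → Φ x u ≤ c x := by
      intro x u hu
      exact le_ciInf fun k => mono x _ _ (fun s => le_trans (hu s) (htg k s))
    have hK1 : ∀ x : X, ∀ u : U, g ≤ (u : S → ℝ) → c x ≤ Φ x u := by
      intro x u hu
      apply le_of_forall_sub_le
      intro ε hε
      obtain ⟨t, htT, htle, htle'⟩ := hTdense (u : S → ℝ) u.2 ε hε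
      have htmem : t ∈ {t ∈ T | g ≤ t} := ⟨htT, fun s => le_trans (hu s) (htle s)⟩
      obtain ⟨k, hk⟩ := htseq ▸ htmem
      have h1 : c x ≤ Φ x ⟨tseq k, htU k⟩ := ciInf_le (hbdd x) k
      have h2 : Φ x ⟨tseq k, htU k⟩ ≤ Φ x u + ε := by
        have hle : ((⟨tseq k, htU k⟩ : U) : S → ℝ) ≤ ((u + ε • (⟨fun _ => 1, h1U⟩ : U) : U) : S → ℝ) := by
          intro s
          have h5 := htle' s
          simp only [Submodule.coe_add, SetLike.val_smul, Pi.add_apply, Pi.smul_apply,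
            smul_eq_mul, mul_one] at h5 ⊢
          rw [hk]
          exact h5
        have h6 := mono x _ _ hle
        rw [map_add, _root_.map_smul, hΦone] at h6
        simpa using h6
      linarith
    -- construct the extension via LinearPMap
    set pm : X → ((S → ℝ) →ₗ.[ℝ] ℝ) := fun x =>
      LinearPMap.supSpanSingleton ⟨U, Φ x⟩ g (c x) hg with hpm
    have hdom : ∀ x, U' ≤ (pm x).domain := by
      intro x
      rw [hpm]
      simp only [LinearPMap.domain_supSpanSingleton]
      rw [hU']
    set Φ' : X → U' →ₗ[ℝ] ℝ := fun x => (pm x).toFun.comp (Submodule.inclusion (hdom x)) with hΦ'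
    have key : ∀ x : X, ∀ (u : S → ℝ) (hu : u ∈ U) (a : ℝ) (f : U'),
        (f : S → ℝ) = u + a • g → Φ' x f = Φ x ⟨u, hu⟩ + a * c x := by
      intro x u hu a f hf
      have hmem : u + a • g ∈ (pm x).domain := by
        rw [← hf]
        exact hdom x f.2
      have h7 : (Submodule.inclusion (hdom x) f) = (⟨u + a • g, hmem⟩ : (pm x).domain) := by
        apply Subtype.ext
        simpa using hf
      have h8 : Φ' x f = (pm x).toFun ⟨u + a • g, hmem⟩ := by
        rw [hΦ']
        simp only [LinearMap.comp_apply]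
        exact congrArg (⇑(pm x).toFun) h7
      rw [h8]
      have h9 := LinearPMap.supSpanSingleton_apply_mk (⟨U, Φ x⟩ : (S → ℝ) →ₗ.[ℝ] ℝ) g (c x) hg u hu a
      simp only [smul_eq_mul] at h9
      exact h9
    have hdecomp : ∀ f : U', ∃ (u : S → ℝ) (hu : u ∈ U) (a : ℝ), (f : S → ℝ) = u + a • g := by
      rintro ⟨fv, hf⟩
      have hf2 : fv ∈ U ⊔ Submodule.span ℝ {g} := hU' ▸ hf
      obtain ⟨u, hu, v, hv, huv⟩ := Submodule.mem_sup.1 hf2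
      obtain ⟨a, ha⟩ := Submodule.mem_span_singleton.1 hv
      exact ⟨u, hu, a, by show fv = u + a • g; rw [← huv, ← ha]⟩
    refine ⟨Φ', ?_, ?_, ?_⟩
    · intro x f hf
      have := key x (f : S → ℝ) hf 0 f (by simp)
      simpa using this
    · intro f
      obtain ⟨u, hu, a, hf⟩ := hdecomp f
      have heq : (fun x => Φ' x f) = fun x => Φ x ⟨u, hu⟩ + a * c x :=
        funext fun x => key x u hu a f hf
      rw [heq]
      exact (hΦmeas _).add (hcmeas.const_mul a)
    · intro x f hf
      obtain ⟨u, hu, a, hfd⟩ := hdecomp f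
      rw [key x u hu a f hfd]
      rcases lt_trichotomy a 0 with ha | ha | ha
      · -- a < 0 : g ≤ (-a)⁻¹ • u
        have hga : g ≤ (-a)⁻¹ • u := by
          intro s
          have h10 : (0:ℝ) ≤ u s + a * g s := by
            have := hf s
            rw [hfd] at this
            simpa using this
          have hna : (0:ℝ) < -a := by linarith
          rw [Pi.smul_apply, smul_eq_mul, ← sub_nonneg]
          have heq2 : (-a)⁻¹ * u s - g s = ((-a)⁻¹) * (u s + a * g s) := by
            have hane : a ≠ 0 := ne_of_lt ha
            field_simp
            ring
          rw [heq2]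
          positivity
        have h11 := hK1 x ⟨(-a)⁻¹ • u, smul_mem _ _ hu⟩ hga
        have h12 : Φ x ⟨(-a)⁻¹ • u, smul_mem _ _ hu⟩ = (-a)⁻¹ * Φ x ⟨u, hu⟩ := by
          have : (⟨(-a)⁻¹ • u, smul_mem _ _ hu⟩ : U) = (-a)⁻¹ • (⟨u, hu⟩ : U) := rfl
          rw [this, _root_.map_smul, smul_eq_mul]
        rw [h12] at h11
        have hna : (0:ℝ) < -a := by linarith
        -- c x ≤ (-a)⁻¹ Φ u  ⇒  (-a) * c x ≤ Φ u
        have h13 : (-a) * c x ≤ Φ x ⟨u, hu⟩ := by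
          have := mul_le_mul_of_nonneg_left h11 (le_of_lt hna)
          rwa [← mul_assoc, mul_inv_cancel₀ (ne_of_gt hna), one_mul] at this
        linarith
      · subst ha
        simp only [zero_mul, add_zero]
        apply hΦpos
        intro s
        have := hf s
        rw [hfd] at this
        simpa using this
      · -- a > 0 : (-a⁻¹) • u ≤ g
        have hga : ((-(a⁻¹)) • u : S → ℝ) ≤ g := by
          intro s
          have h10 : (0:ℝ) ≤ u s + a * g s := by
            have := hf s
            rw [hfd] at this
            simpa using this
          rw [Pi.smul_apply, smul_eq_mul, ← sub_nonneg]
          have : g s - (-(a⁻¹)) * u s = a⁻¹ * (u s + a * g s) := by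
            have hane : a ≠ 0 := ne_of_gt ha
            field_simp
            ring
          rw [this]
          positivity
        have h11 := hK2 x ⟨(-(a⁻¹)) • u, smul_mem _ _ hu⟩ hga
        have h12 : Φ x ⟨(-(a⁻¹)) • u, smul_mem _ _ hu⟩ = (-(a⁻¹)) * Φ x ⟨u, hu⟩ := by
          have : (⟨(-(a⁻¹)) • u, smul_mem _ _ hu⟩ : U) = (-(a⁻¹)) • (⟨u, hu⟩ : U) := rfl
          rw [this, _root_.map_smul, smul_eq_mul]
        rw [h12] at h11
        have h13 : -(Φ x ⟨u, hu⟩) ≤ a * c x := by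
          have := mul_le_mul_of_nonneg_left h11 (le_of_lt ha)
          rw [← mul_assoc] at this
          rw [show a * -(a⁻¹) = -1 by field_simp] at this
          linarith
        linarith


private theorem rat_approx {S : Type*} [Nonempty S] (G : Set (S → ℝ))
    (hbdd : ∀ u ∈ Submodule.span ℝ G, ∃ C : ℝ, ∀ s, |u s| ≤ C) :
    ∀ u ∈ Submodule.span ℝ G, ∀ ε : ℝ, 0 < ε →
      ∃ t ∈ Submodule.span ℚ G, ∀ s, |t s - u s| ≤ ε := by
  intro u hu
  induction hu using Submodule.span_induction with
  | mem x h =>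
    exact fun ε hε => ⟨x, subset_span h, fun s => by simp [le_of_lt hε]⟩
  | zero =>
    exact fun ε hε => ⟨0, zero_mem _, fun s => by simp [le_of_lt hε]⟩
  | add x y hx hy ihx ihy =>
    intro ε hε
    obtain ⟨t₁, ht₁, h₁⟩ := ihx (ε/2) (by linarith)
    obtain ⟨t₂, ht₂, h₂⟩ := ihy (ε/2) (by linarith)
    refine ⟨t₁ + t₂, add_mem ht₁ ht₂, fun s => ?_⟩
    have := h₁ s; have := h₂ s
    simp only [Pi.add_apply]
    have : t₁ s + t₂ s - (x s + y s) = (t₁ s - x s) + (t₂ s - y s) := by ring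
    rw [this]
    calc |(t₁ s - x s) + (t₂ s - y s)| ≤ |t₁ s - x s| + |t₂ s - y s| := abs_add_le _ _
      _ ≤ ε/2 + ε/2 := add_le_add (h₁ s) (h₂ s)
      _ = ε := by ring
  | smul a x hx ih =>
    intro ε hε
    obtain ⟨C, hC⟩ := hbdd x hx
    have hC0 : 0 ≤ C := le_trans (abs_nonneg _) (hC (Classical.arbitrary S))
    obtain ⟨q, hq⟩ := exists_rat_near a (show (0:ℝ) < ε/(2*(C+1)) by positivity)
    obtain ⟨t, htmem, ht⟩ := ih (ε/(2*(|(q:ℝ)|+1))) (by positivity)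
    refine ⟨(q : ℚ) • t, smul_mem _ _ htmem, fun s => ?_⟩
    have h1 : ((q : ℚ) • t) s = (q : ℝ) * t s := by
      simp [Rat.smul_def]
    rw [h1, Pi.smul_apply, smul_eq_mul]
    have h2 : (q:ℝ) * t s - a * x s = (q:ℝ) * (t s - x s) + ((q:ℝ) - a) * x s := by ring
    rw [h2]
    have h3 : |(q:ℝ) * (t s - x s)| ≤ |(q:ℝ)| * (ε/(2*(|(q:ℝ)|+1))) := by
      rw [abs_mul]
      exact mul_le_mul_of_nonneg_left (ht s) (abs_nonneg _)
    have h4 : |((q:ℝ) - a) * x s| ≤ (ε/(2*(C+1))) * C := by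
      rw [abs_mul]
      apply _root_.mul_le_mul
      · rw [abs_sub_comm]; exact le_of_lt hq
      · exact hC s
      · exact abs_nonneg _
      · positivity
    have h5 : |(q:ℝ)| * (ε/(2*(|(q:ℝ)|+1))) ≤ ε/2 := by
      rw [mul_div_assoc', div_le_div_iff₀ (by positivity) (by norm_num : (0:ℝ) < 2)]
      nlinarith [abs_nonneg (q:ℝ)]
    have h6 : (ε/(2*(C+1))) * C ≤ ε/2 := by
      rw [div_mul_eq_mul_div, div_le_div_iff₀ (by positivity) (by norm_num : (0:ℝ) < 2)]
      nlinarith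
    calc |(q:ℝ) * (t s - x s) + ((q:ℝ) - a) * x s|
        ≤ |(q:ℝ) * (t s - x s)| + |((q:ℝ) - a) * x s| := abs_add_le _ _
      _ ≤ ε/2 + ε/2 := add_le_add (le_trans h3 h5) (le_trans h4 h6)
      _ = ε := by ring

private theorem rat_dense {S : Type*} [Nonempty S] (G : Set (S → ℝ))
    (h1G : (fun _ : S => (1:ℝ)) ∈ G)
    (hbdd : ∀ u ∈ Submodule.span ℝ G, ∃ C : ℝ, ∀ s, |u s| ≤ C) :
    ∀ u ∈ Submodule.span ℝ G, ∀ ε : ℝ, 0 < ε →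
      ∃ t ∈ (Submodule.span ℚ G : Submodule ℚ (S → ℝ)),
        u ≤ t ∧ t ≤ u + ε • (fun _ : S => (1:ℝ)) := by
  intro u hu ε hε
  obtain ⟨t, htmem, ht⟩ := rat_approx G hbdd u hu (ε/3) (by linarith)
  obtain ⟨q, hq1, hq2⟩ := exists_rat_btwn (show (ε/3 : ℝ) < 2*ε/3 by linarith)
  refine ⟨t + (q : ℚ) • (fun _ : S => (1:ℝ)),
    add_mem htmem (smul_mem _ _ (subset_span h1G)), ?_, ?_⟩
  · intro s
    have h1 := (abs_le.1 (ht s)).1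
    have h2 : (t + (q:ℚ) • (fun _ : S => (1:ℝ))) s = t s + (q:ℝ) := by
      simp [Rat.smul_def]
    rw [h2]
    linarith
  · intro s
    have h1 := (abs_le.1 (ht s)).2
    have h2 : (t + (q:ℚ) • (fun _ : S => (1:ℝ))) s = t s + (q:ℝ) := by
      simp [Rat.smul_def]
    have h3 : (u + ε • (fun _ : S => (1:ℝ))) s = u s + ε := by simp
    rw [h2, h3]
    linarith


section Chain

variable {S X : Type*} [Nonempty S] [MeasurableSpace X]
  (U_ : ℕ → Submodule ℝ (S → ℝ)) (g : ℕ → S → ℝ)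
  (h1U : ∀ n, (fun _ : S => (1:ℝ)) ∈ U_ n)
  (hgC : ∀ n, ∃ C : ℝ, ∀ s, |g n s| ≤ C)
  (hU' : ∀ n, U_ (n+1) = U_ n ⊔ Submodule.span ℝ {g n})
  (T_ : ℕ → Set (S → ℝ)) (hTc : ∀ n, (T_ n).Countable)
  (hTU : ∀ n, T_ n ⊆ (U_ n : Set (S → ℝ)))
  (hTdense : ∀ n, ∀ u ∈ U_ n, ∀ ε : ℝ, 0 < ε →
    ∃ t ∈ T_ n, u ≤ t ∧ t ≤ u + ε • (fun _ : S => (1:ℝ)))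
  (Φ0 : X → U_ 0 →ₗ[ℝ] ℝ)
  (hΦ0meas : ∀ f : U_ 0, Measurable fun x => Φ0 x f)
  (hΦ0one : ∀ x, Φ0 x ⟨fun _ => 1, h1U 0⟩ = 1)
  (hΦ0pos : ∀ x : X, ∀ f : U_ 0, (0 : S → ℝ) ≤ (f : S → ℝ) → 0 ≤ Φ0 x f)

private def ChainProp (n : ℕ) (Φ : X → U_ n →ₗ[ℝ] ℝ) : Prop :=
  (∀ f : U_ n, Measurable fun x => Φ x f) ∧
  (∀ x, Φ x ⟨fun _ => 1, h1U n⟩ = 1) ∧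
  (∀ x : X, ∀ f : U_ n, (0 : S → ℝ) ≤ (f : S → ℝ) → 0 ≤ Φ x f)

private noncomputable def chain :
    ∀ n : ℕ, {Φ : X → U_ n →ₗ[ℝ] ℝ // ChainProp U_ h1U n Φ}
  | 0 => ⟨Φ0, hΦ0meas, hΦ0one, hΦ0pos⟩
  | (n+1) =>
    ⟨Classical.choose (ext_step (U_ n) (U_ (n+1)) (g n) (h1U n) (hgC n) (hU' n) (T_ n)
        (hTc n) (hTU n) (hTdense n)
        (chain n).1
        (chain n).2.1
        (chain n).2.2.1
        (chain n).2.2.2),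
      by
        have hspec := Classical.choose_spec (ext_step (U_ n) (U_ (n+1)) (g n) (h1U n) (hgC n)
          (hU' n) (T_ n) (hTc n) (hTU n) (hTdense n)
          (chain n).1
          (chain n).2.1
          (chain n).2.2.1
          (chain n).2.2.2)
        refine ⟨hspec.2.1, ?_, hspec.2.2⟩
        intro x
        rw [hspec.1 x ⟨fun _ => 1, h1U (n+1)⟩ (h1U n)]
        exact (chain n).2.2.1 x⟩

private theorem chain_agree (n : ℕ) :
    ∀ x, ∀ f : U_ (n+1), ∀ hf : (f : S → ℝ) ∈ U_ n,
      (chain U_ g h1U hgC hU' T_ hTc hTU hTdense Φ0 hΦ0meas hΦ0one hΦ0pos (n+1)).1 x f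
        = (chain U_ g h1U hgC hU' T_ hTc hTU hTdense Φ0 hΦ0meas hΦ0one hΦ0pos n).1 x ⟨f, hf⟩ := by
  intro x f hf
  have hspec := Classical.choose_spec (ext_step (U_ n) (U_ (n+1)) (g n) (h1U n) (hgC n)
    (hU' n) (T_ n) (hTc n) (hTU n) (hTdense n)
    (chain U_ g h1U hgC hU' T_ hTc hTU hTdense Φ0 hΦ0meas hΦ0one hΦ0pos n).1
    (chain U_ g h1U hgC hU' T_ hTc hTU hTdense Φ0 hΦ0meas hΦ0one hΦ0pos n).2.1
    (chain U_ g h1U hgC hU' T_ hTc hTU hTdense Φ0 hΦ0meas hΦ0one hΦ0pos n).2.2.1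
    (chain U_ g h1U hgC hU' T_ hTc hTU hTdense Φ0 hΦ0meas hΦ0one hΦ0pos n).2.2.2)
  exact hspec.1 x f hf

end Chain
/-- Measurable-in-parameter Hahn-Banach extension of positive functionals
(Lemma 4 of the paper). -/
theorem measurable_positive_extension
    {S : Type*} [Nonempty S] {X : Type*} [MeasurableSpace X]
    (V W : Submodule ℝ (S → ℝ)) (hWV : W ≤ V)
    (hVbdd : ∀ f ∈ V, ∃ C : ℝ, ∀ s : S, |f s| ≤ C)
    (hVcount : ∃ D : Set (S → ℝ), D.Countable ∧ V = Submodule.span ℝ D)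
    (hconst : ∀ c : ℝ, (fun _ : S => c) ∈ W)
    (Ψ : X → W →ₗ[ℝ] ℝ)
    (hmeas : ∀ f : W, Measurable fun x => Ψ x f)
    (hone : ∀ x : X, Ψ x ⟨fun _ => 1, hconst 1⟩ = 1)
    (hpos : ∀ x : X, ∀ f : W, (0 : S → ℝ) ≤ (f : S → ℝ) → 0 ≤ Ψ x f) :
    ∃ Φ : X → V →ₗ[ℝ] ℝ,
      (∀ x : X, ∀ f : S → ℝ, ∀ hf : f ∈ W, Φ x ⟨f, hWV hf⟩ = Ψ x ⟨f, hf⟩) ∧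
      (∀ f : V, Measurable fun x => Φ x f) ∧
      (∀ x : X, ∀ f : V, (0 : S → ℝ) ≤ (f : S → ℝ) → 0 ≤ Φ x f) := by
  classical
  obtain ⟨D, hDc, hDspan⟩ := hVcount
  have h1W : (fun _ : S => (1:ℝ)) ∈ W := hconst 1
  have h1V : (fun _ : S => (1:ℝ)) ∈ V := hWV h1W
  have hDne : D.Nonempty := by
    rcases D.eq_empty_or_nonempty with h | h
    · exfalso
      rw [h, Submodule.span_empty] at hDspan
      have h2 := hDspan ▸ h1V
      have h3 := congrFun ((Submodule.mem_bot ℝ).1 h2) (Classical.arbitrary S)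
      simpa using h3
    · exact h
  obtain ⟨e, he⟩ := hDc.exists_eq_range hDne
  have heD : ∀ n, e n ∈ D := fun n => he ▸ Set.mem_range_self n
  have heV : ∀ n, e n ∈ V := fun n => hDspan ▸ Submodule.subset_span (heD n)
  -- countable spanning set of W
  have hrankV : Module.rank ℝ V ≤ Cardinal.aleph0 := by
    rw [hDspan]
    exact le_trans (rank_span_le D)
      (Cardinal.mk_le_aleph0_iff.2 hDc.to_subtype)
  have hrankW : Module.rank ℝ W ≤ Cardinal.aleph0 :=
    le_trans (Submodule.rank_mono hWV) hrankV
  have hWcount : ∃ E : Set (S → ℝ), E.Countable ∧ Submodule.span ℝ E = W := by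
    let b := Module.Basis.ofVectorSpace ℝ W
    haveI : Countable (Module.Basis.ofVectorSpaceIndex ℝ W) := by
      rw [← Cardinal.mk_le_aleph0_iff, b.mk_eq_rank'']
      exact hrankW
    refine ⟨W.subtype '' (Set.range ⇑b), (Set.countable_range ⇑b).image _, ?_⟩
    rw [Submodule.span_image, b.span_eq, Submodule.map_subtype_top]
  obtain ⟨E, hEc, hEW⟩ := hWcount
  have hEsubW : E ⊆ (W : Set (S → ℝ)) := by
    rw [← hEW]; exact Submodule.subset_span
  -- the tower of submodules
  set G : ℕ → Set (S → ℝ) :=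
    fun n => insert (fun _ : S => (1:ℝ)) (E ∪ e '' Set.Iio n) with hG
  set U_ : ℕ → Submodule ℝ (S → ℝ) := fun n => Submodule.span ℝ (G n) with hU_
  set T_ : ℕ → Set (S → ℝ) :=
    fun n => ((Submodule.span ℚ (G n) : Submodule ℚ (S → ℝ)) : Set (S → ℝ)) with hT_
  have hGV : ∀ n, G n ⊆ (V : Set (S → ℝ)) := by
    intro n x hx
    rcases hx with rfl | hx
    · exact h1V
    rcases hx with hx | ⟨k, -, rfl⟩
    · exact hWV (hEsubW hx)
    · exact heV k
  have hUV : ∀ n, U_ n ≤ V := fun n => Submodule.span_le.2 (hGV n)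
  have h1G : ∀ n, (fun _ : S => (1:ℝ)) ∈ G n := fun n => Set.mem_insert _ _
  have h1U : ∀ n, (fun _ : S => (1:ℝ)) ∈ U_ n := fun n => Submodule.subset_span (h1G n)
  have hWU : ∀ n, W ≤ U_ n := by
    intro n
    rw [← hEW]
    exact Submodule.span_mono (fun x hx => Set.mem_insert_iff.2 (Or.inr (Or.inl hx)))
  have hU0 : U_ 0 ≤ W := by
    apply Submodule.span_le.2
    intro x hx
    rcases hx with rfl | hx
    · exact h1W
    rcases hx with hx | ⟨k, hk, rfl⟩
    · exact hEsubW hx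
    · simp at hk
  have hstep : ∀ n, U_ (n+1) = U_ n ⊔ Submodule.span ℝ {e n} := by
    intro n
    have hGn : G (n+1) = insert (e n) (G n) := by
      ext x
      simp only [hG, Set.mem_insert_iff, Set.mem_union, Set.mem_image, Set.mem_Iio]
      constructor
      · rintro (rfl | hx | ⟨k, hk, rfl⟩)
        · exact Or.inr (Or.inl rfl)
        · exact Or.inr (Or.inr (Or.inl hx))
        · rcases Nat.lt_succ_iff_lt_or_eq.1 hk with hk | rfl
          · exact Or.inr (Or.inr (Or.inr ⟨k, hk, rfl⟩))
          · exact Or.inl rfl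
      · rintro (rfl | rfl | hx | ⟨k, hk, rfl⟩)
        · exact Or.inr (Or.inr ⟨n, Nat.lt_succ_self n, rfl⟩)
        · exact Or.inl rfl
        · exact Or.inr (Or.inl hx)
        · exact Or.inr (Or.inr ⟨k, Nat.lt_succ_of_lt hk, rfl⟩)
    show Submodule.span ℝ (G (n+1)) = Submodule.span ℝ (G n) ⊔ Submodule.span ℝ {e n}
    rw [hGn, Submodule.span_insert]
    exact sup_comm _ _
  have hgC' : ∀ n, ∃ C : ℝ, ∀ s, |e n s| ≤ C := fun n => hVbdd _ (heV n)
  have hGc : ∀ n, (G n).Countable := fun n =>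
    ((hEc.union ((Set.to_countable _).image e)).insert _)
  have hTc : ∀ n, (T_ n).Countable := by
    intro n
    obtain ⟨v, hv⟩ := (hGc n).exists_eq_range ⟨_, h1G n⟩
    show ((Submodule.span ℚ (G n) : Submodule ℚ (S → ℝ)) : Set (S → ℝ)).Countable
    rw [hv]
    have hcnt : Countable (Submodule.span ℚ (Set.range v)) := inferInstance
    exact Set.countable_coe_iff.1 hcnt
  have hTU : ∀ n, T_ n ⊆ (U_ n : Set (S → ℝ)) := by
    intro n
    exact Submodule.span_subset_span ℚ ℝ (G n)
  have hTdense : ∀ n, ∀ u ∈ U_ n, ∀ ε : ℝ, 0 < ε →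
      ∃ t ∈ T_ n, u ≤ t ∧ t ≤ u + ε • (fun _ : S => (1:ℝ)) := by
    intro n u hu ε hε
    obtain ⟨t, ht, h1, h2⟩ := rat_dense (G n) (h1G n)
      (fun w hw => hVbdd w (hUV n hw)) u hu ε hε
    exact ⟨t, ht, h1, h2⟩
  -- base functional
  set Φ0 : X → U_ 0 →ₗ[ℝ] ℝ := fun x => (Ψ x).comp (Submodule.inclusion hU0) with hΦ0
  have hΦ0meas : ∀ f : U_ 0, Measurable fun x => Φ0 x f :=
    fun f => hmeas (Submodule.inclusion hU0 f)
  have hΦ0one : ∀ x, Φ0 x ⟨fun _ => 1, h1U 0⟩ = 1 := by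
    intro x
    show Ψ x (Submodule.inclusion hU0 ⟨fun _ => 1, h1U 0⟩) = 1
    rw [show (Submodule.inclusion hU0 ⟨fun _ => (1:ℝ), h1U 0⟩ : W)
        = ⟨fun _ => 1, hconst 1⟩ from Subtype.ext rfl]
    exact hone x
  have hΦ0pos : ∀ x : X, ∀ f : U_ 0, (0 : S → ℝ) ≤ (f : S → ℝ) → 0 ≤ Φ0 x f :=
    fun x f hf => hpos x (Submodule.inclusion hU0 f) hf
  -- the chain
  set ch := fun n => chain U_ e h1U hgC' hstep T_ hTc hTU hTdense Φ0 hΦ0meas hΦ0one hΦ0pos n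
    with hch
  have hmonoU : Monotone U_ := by
    intro m n hmn
    apply Submodule.span_mono
    exact Set.insert_subset_insert (Set.union_subset_union_right _
      (Set.image_mono (Set.Iio_subset_Iio hmn)))
  have hagree2 : ∀ m n, m ≤ n → ∀ x, ∀ fv : S → ℝ, ∀ (hfm : fv ∈ U_ m) (hfn : fv ∈ U_ n),
      (ch n).1 x ⟨fv, hfn⟩ = (ch m).1 x ⟨fv, hfm⟩ := by
    intro m n hmn
    induction n, hmn using Nat.le_induction with
    | base =>
      intro x fv hfm hfn
      exact congrArg _ (Subtype.ext rfl)
    | succ n hmn ih =>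
      intro x fv hfm hfn
      have hfn' : fv ∈ U_ n := hmonoU hmn hfm
      have h4 := chain_agree U_ e h1U hgC' hstep T_ hTc hTU hTdense Φ0 hΦ0meas hΦ0one hΦ0pos
        n x ⟨fv, hfn⟩ hfn'
      rw [hch]
      rw [h4]
      exact ih x fv hfm hfn'
  have hcover : ∀ fv ∈ V, ∃ n, fv ∈ U_ n := by
    intro fv hfv
    have h5 : V ≤ ⨆ n, U_ n := by
      have h6 : V ≤ Submodule.span ℝ (⋃ n, G n) := by
        rw [hDspan]
        apply Submodule.span_mono
        intro x hx
        rw [he] at hx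
        obtain ⟨k, rfl⟩ := hx
        exact Set.mem_iUnion.2 ⟨k+1, Or.inr (Or.inr ⟨k, Nat.lt_succ_self k, rfl⟩)⟩
      rw [Submodule.span_iUnion] at h6
      exact h6
    have h7 := h5 hfv
    have h8 : ((⨆ n, U_ n : Submodule ℝ (S → ℝ)) : Set (S → ℝ)) = ⋃ n, (U_ n : Set (S → ℝ)) :=
      Submodule.coe_iSup_of_directed _ hmonoU.directed_le
    have h9 : fv ∈ ⋃ n, (U_ n : Set (S → ℝ)) := h8 ▸ h7
    exact Set.mem_iUnion.1 h9
  choose nidx hnidx using hcover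
  have hval : ∀ x (fv : S → ℝ) (hv : fv ∈ V) (n : ℕ) (hfn : fv ∈ U_ n),
      (ch (nidx fv hv)).1 x ⟨fv, hnidx fv hv⟩ = (ch n).1 x ⟨fv, hfn⟩ := by
    intro x fv hv n hfn
    have h5 := hagree2 (nidx fv hv) (max (nidx fv hv) n) (le_max_left _ _) x fv
      (hnidx fv hv) (hmonoU (le_max_left _ _) (hnidx fv hv))
    have h6 := hagree2 n (max (nidx fv hv) n) (le_max_right _ _) x fv hfn
      (hmonoU (le_max_left _ _) (hnidx fv hv))
    rw [← h5, ← h6]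
  set Φ : X → V →ₗ[ℝ] ℝ := fun x =>
    { toFun := fun f => (ch (nidx f f.2)).1 x ⟨f, hnidx f f.2⟩
      map_add' := by
        intro p q
        set n := max (max (nidx p p.2) (nidx q q.2)) (nidx ((p+q : V) : S → ℝ) (p+q).2) with hn
        have hpm : (p : S → ℝ) ∈ U_ n :=
          hmonoU (le_trans (le_max_left _ _) (le_max_left _ _)) (hnidx p p.2)
        have hqm : (q : S → ℝ) ∈ U_ n :=
          hmonoU (le_trans (le_max_right _ _) (le_max_left _ _)) (hnidx q q.2)
        have hpq : ((p + q : V) : S → ℝ) ∈ U_ n :=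
          hmonoU (le_max_right _ _) (hnidx (p+q) (p+q).2)
        rw [hval x p p.2 n hpm, hval x q q.2 n hqm, hval x ((p+q : V) : S → ℝ) (p+q).2 n hpq]
        rw [show (⟨((p + q : V) : S → ℝ), hpq⟩ : U_ n)
            = ⟨p, hpm⟩ + ⟨q, hqm⟩ from Subtype.ext rfl]
        exact map_add _ _ _
      map_smul' := by
        intro a p
        set n := max (nidx p p.2) (nidx ((a • p : V) : S → ℝ) (a • p).2) with hn
        have hpm : (p : S → ℝ) ∈ U_ n := hmonoU (le_max_left _ _) (hnidx p p.2)
        have hap : ((a • p : V) : S → ℝ) ∈ U_ n :=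
          hmonoU (le_max_right _ _) (hnidx (a • p) (a • p).2)
        rw [hval x p p.2 n hpm, hval x ((a • p : V) : S → ℝ) (a • p).2 n hap]
        rw [show (⟨((a • p : V) : S → ℝ), hap⟩ : U_ n)
            = a • ⟨p, hpm⟩ from Subtype.ext rfl]
        rw [_root_.map_smul]
        rfl } with hΦdef
  refine ⟨Φ, ?_, ?_, ?_⟩
  · intro x f hf
    have hf0 : f ∈ U_ 0 := hWU 0 hf
    show (ch (nidx f (hWV hf))).1 x ⟨f, hnidx f (hWV hf)⟩ = Ψ x ⟨f, hf⟩
    rw [hval x f (hWV hf) 0 hf0]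
    have hch0 : (ch 0).1 = Φ0 := rfl
    rw [hch0]
    show Ψ x (Submodule.inclusion hU0 ⟨f, hf0⟩) = Ψ x ⟨f, hf⟩
    exact congrArg _ (Subtype.ext rfl)
  · intro f
    exact (ch (nidx f f.2)).2.1 ⟨f, hnidx f f.2⟩
  · intro x f hf
    exact (ch (nidx f f.2)).2.2.2 x ⟨f, hnidx f f.2⟩ hf
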